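/- arXiv:1604.08402 — 3 statements merged into one kernel-verified Lean document; each statement's English description precedes it below -/
import Mathlib

section
/- For every ε > 0, the modified Laplace mechanism on a single rating is ε-differentially private: for all x, y ∈ [−1,1] ∪ {?} and every measurable subset S of ℝ ∪ {?}, Pr(M(x) ∈ S) ≤ exp(ε) · Pr(M(y) ∈ S). -/
open MeasureTheory Real
open scoped ENNReal

/-- Measurable space structure on `Option α`, via the equivalence with `α ⊕ PUnit`. -/
instance instMeasurableSpaceOption {α : Type u_1} [MeasurableSpace α] :
    MeasurableSpace (Option α) :=
  MeasurableSpace.comap (Equiv.optionEquivSumPUnit.{0, u_1} α) inferInstance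

/-- The Laplace distribution with location `c` and scale `2/ε`,
given by the density `t ↦ (ε/4) * exp (-ε * |t - c| / 2)`. -/
noncomputable def laplaceMeasure (ε c : ℝ) : Measure ℝ :=
  volume.withDensity fun t => ENNReal.ofReal (ε / 4 * Real.exp (-(ε * |t - c|) / 2))

/-- The modified Laplace mechanism on a single rating.  `none` is the missing rating `?`.
A present rating `x` is sent to `x + ξ` with probability `e^{ε/2}/(e^{ε/2}+1)` and to `?`
otherwise; a missing rating is sent to `?` with probability `e^{ε/2}/(e^{ε/2}+1)` and to `ξ`
otherwise, where `ξ ~ Laplace(0, 2/ε)`. -/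
noncomputable def modLaplace (ε : ℝ) (x : Option ℝ) : Measure (Option ℝ) :=
  match x with
  | some r =>
      ENNReal.ofReal (Real.exp (ε / 2) / (Real.exp (ε / 2) + 1)) •
          (laplaceMeasure ε r).map Option.some +
        ENNReal.ofReal (1 / (Real.exp (ε / 2) + 1)) • Measure.dirac (none : Option ℝ)
  | none =>
      ENNReal.ofReal (Real.exp (ε / 2) / (Real.exp (ε / 2) + 1)) •
          Measure.dirac (none : Option ℝ) +
        ENNReal.ofReal (1 / (Real.exp (ε / 2) + 1)) • (laplaceMeasure ε 0).map Option.some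

lemma measurable_some_opt : Measurable (Option.some : ℝ → Option ℝ) := by
  intro s hs
  obtain ⟨t, ht, rfl⟩ := hs
  exact measurable_inl ht

lemma lap_le (ε c d b : ℝ) (hε : 0 < ε) (h : |c - d| ≤ b)
    (A : Set ℝ) (hA : MeasurableSet A) :
    laplaceMeasure ε c A ≤ ENNReal.ofReal (Real.exp (ε * b / 2)) * laplaceMeasure ε d A := by
  rw [laplaceMeasure, laplaceMeasure, withDensity_apply _ hA, withDensity_apply _ hA,
    ← lintegral_const_mul' _ _ ENNReal.ofReal_ne_top]
  refine lintegral_mono fun t => ?_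
  rw [← ENNReal.ofReal_mul (Real.exp_nonneg _)]
  refine ENNReal.ofReal_le_ofReal ?_
  rw [← mul_assoc, mul_comm (Real.exp (ε * b / 2)), mul_assoc, ← Real.exp_add]
  refine mul_le_mul_of_nonneg_left (Real.exp_le_exp.2 ?_) (by positivity)
  have h1 : |t - d| ≤ |t - c| + b := by
    have := abs_sub_le t c d; linarith
  nlinarith [abs_nonneg (t - c), abs_nonneg (t - d)]

/-- The modified Laplace mechanism on a single rating is `ε`-differentially private. -/
theorem modLaplace_single_dp (ε : ℝ) (hε : 0 < ε) (x y : Option ℝ)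
    (hx : ∀ r : ℝ, x = some r → r ∈ Set.Icc (-1 : ℝ) 1)
    (hy : ∀ r : ℝ, y = some r → r ∈ Set.Icc (-1 : ℝ) 1)
    (S : Set (Option ℝ)) (hS : MeasurableSet S) :
    modLaplace ε x S ≤ ENNReal.ofReal (Real.exp ε) * modLaplace ε y S := by
  set p : ℝ≥0∞ := ENNReal.ofReal (Real.exp (ε / 2) / (Real.exp (ε / 2) + 1)) with hp
  set q : ℝ≥0∞ := ENNReal.ofReal (1 / (Real.exp (ε / 2) + 1)) with hq
  set E : ℝ≥0∞ := ENNReal.ofReal (Real.exp ε) with hE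
  set h : ℝ≥0∞ := ENNReal.ofReal (Real.exp (ε / 2)) with hh
  have hA : MeasurableSet (Option.some ⁻¹' S) := measurable_some_opt hS
  have happ : ∀ c : ℝ, ((laplaceMeasure ε c).map Option.some) S
      = laplaceMeasure ε c (Option.some ⁻¹' S) := fun c =>
    Measure.map_apply measurable_some_opt hS
  have hpq : p = h * q := by
    rw [hp, hh, hq, ← ENNReal.ofReal_mul (Real.exp_nonneg _)]
    congr 1; field_simp
  have hqp : q ≤ p := by
    refine ENNReal.ofReal_le_ofReal ?_
    gcongr
    exact Real.one_le_exp (by positivity)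
  have hhE : h * h = E := by
    rw [hh, hE, ← ENNReal.ofReal_mul (Real.exp_nonneg _), ← Real.exp_add]
    ring_nf
  have hhle : h ≤ E := by
    refine ENNReal.ofReal_le_ofReal (Real.exp_le_exp.2 (by linarith))
  have honeE : (1 : ℝ≥0∞) ≤ E := by
    rw [hE]; exact ENNReal.one_le_ofReal.2 (Real.one_le_exp hε.le)
  set D : ℝ≥0∞ := Measure.dirac (none : Option ℝ) S with hD
  match x, y with
  | some r, some s =>
    have hr := hx r rfl
    have hs := hy s rfl
    simp only [modLaplace, Measure.add_apply, Measure.smul_apply, smul_eq_mul, happ, ← hD,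
      ← hp, ← hq, ← hE]
    have hL : laplaceMeasure ε r (Option.some ⁻¹' S)
        ≤ E * laplaceMeasure ε s (Option.some ⁻¹' S) := by
      have : |r - s| ≤ 2 := by
        rw [abs_le]; constructor <;> [linarith [hr.1, hs.2]; linarith [hr.2, hs.1]]
      have := lap_le ε r s 2 hε this _ hA
      simpa [hE, mul_div_assoc] using this
    calc p * laplaceMeasure ε r (Option.some ⁻¹' S) + q * D
        ≤ p * (E * laplaceMeasure ε s (Option.some ⁻¹' S)) + E * (q * D) :=
          add_le_add (mul_le_mul_right hL p) (le_mul_of_one_le_left zero_le honeE)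
      _ = E * (p * laplaceMeasure ε s (Option.some ⁻¹' S) + q * D) := by ring
  | some r, none =>
    have hr := hx r rfl
    simp only [modLaplace, Measure.add_apply, Measure.smul_apply, smul_eq_mul, happ, ← hD,
      ← hp, ← hq, ← hE]
    have hL : laplaceMeasure ε r (Option.some ⁻¹' S)
        ≤ h * laplaceMeasure ε 0 (Option.some ⁻¹' S) := by
      have : |r - 0| ≤ 1 := by rw [abs_le]; constructor <;> [linarith [hr.1]; linarith [hr.2]]
      have := lap_le ε r 0 1 hε this _ hA
      simpa [hh, mul_div_assoc] using this
    calc p * laplaceMeasure ε r (Option.some ⁻¹' S) + q * D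
        ≤ p * (h * laplaceMeasure ε 0 (Option.some ⁻¹' S)) + E * (p * D) :=
          add_le_add (mul_le_mul_right hL p)
            ((mul_le_mul_left hqp D).trans (le_mul_of_one_le_left zero_le honeE))
      _ = (h * h) * (q * laplaceMeasure ε 0 (Option.some ⁻¹' S)) + E * (p * D) := by
          rw [hpq]; ring
      _ = E * (p * D + q * laplaceMeasure ε 0 (Option.some ⁻¹' S)) := by rw [hhE]; ring
  | none, some s =>
    have hs := hy s rfl
    simp only [modLaplace, Measure.add_apply, Measure.smul_apply, smul_eq_mul, happ, ← hD,
      ← hp, ← hq, ← hE]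
    have hL : laplaceMeasure ε 0 (Option.some ⁻¹' S)
        ≤ h * laplaceMeasure ε s (Option.some ⁻¹' S) := by
      have : |(0 : ℝ) - s| ≤ 1 := by
        rw [abs_le]; constructor <;> [linarith [hs.2]; linarith [hs.1]]
      have := lap_le ε 0 s 1 hε this _ hA
      simpa [hh, mul_div_assoc] using this
    calc p * D + q * laplaceMeasure ε 0 (Option.some ⁻¹' S)
        ≤ p * D + q * (h * laplaceMeasure ε s (Option.some ⁻¹' S)) := by gcongr
      _ = h * (q * D) + (h * q) * laplaceMeasure ε s (Option.some ⁻¹' S) := by rw [hpq]; ring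
      _ ≤ E * (q * D) + E * (p * laplaceMeasure ε s (Option.some ⁻¹' S)) := by
          rw [← hpq]
          exact add_le_add (mul_le_mul_left hhle _)
            (le_mul_of_one_le_left zero_le honeE)
      _ = E * (p * laplaceMeasure ε s (Option.some ⁻¹' S) + q * D) := by ring
  | none, none =>
    exact le_mul_of_one_le_left zero_le honeE
end

section
/- Let ε > 0 and let ξ be a Laplace(0, 2/ε) random variable. For every x ∈ [−1,1] and every measurable set S ⊆ ℝ, both Pr(x + ξ ∈ S) ≤ exp(ε/2) · Pr(ξ ∈ S) and Pr(ξ ∈ S) ≤ exp(ε/2) · Pr(x + ξ ∈ S) hold. -/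
open MeasureTheory Real

lemma laplace_map_apply (ε x : ℝ) (S : Set ℝ) (hS : MeasurableSet S) :
    (laplaceMeasure ε 0).map (fun t => x + t) S
      = ∫⁻ u in S, ENNReal.ofReal (ε / 4 * Real.exp (-(ε * |u - x|) / 2)) := by
  rw [Measure.map_apply (measurable_const_add x) hS, laplaceMeasure,
    withDensity_apply _ (hS.preimage (measurable_const_add x))]
  have := (measurePreserving_add_left volume x).setLIntegral_comp_preimage_emb
    (measurableEmbedding_addLeft x)
    (fun u => ENNReal.ofReal (ε / 4 * Real.exp (-(ε * |u - x|) / 2))) S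
  rw [← this]
  refine setLIntegral_congr_fun (hS.preimage (measurable_const_add x)) ?_
  intro t _
  simp [add_sub_cancel_left]

lemma density_ratio (ε x : ℝ) (hε : 0 < ε) (hx : |x| ≤ 1) (a b : ℝ) (hab : |a| ≤ |b| + |x|) :
    ε / 4 * Real.exp (-(ε * |b|) / 2)
      ≤ Real.exp (ε / 2) * (ε / 4 * Real.exp (-(ε * |a|) / 2)) := by
  rw [mul_comm (Real.exp (ε / 2)), mul_assoc, ← Real.exp_add]
  have h : -(ε * |b|) / 2 ≤ -(ε * |a|) / 2 + ε / 2 := by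
    have h1 : ε * |a| ≤ ε * (|b| + |x|) := mul_le_mul_of_nonneg_left hab hε.le
    have h2 : ε * |x| ≤ ε * 1 := mul_le_mul_of_nonneg_left hx hε.le
    linarith [mul_add ε |b| |x|, mul_one ε]
  exact mul_le_mul_of_nonneg_left (Real.exp_le_exp.2 h) (by positivity)

/-- If `ξ ~ Laplace(0, 2/ε)`, then for every `x ∈ [-1,1]` and every measurable `S ⊆ ℝ`,
both `Pr(x + ξ ∈ S) ≤ exp (ε/2) * Pr(ξ ∈ S)` and `Pr(ξ ∈ S) ≤ exp (ε/2) * Pr(x + ξ ∈ S)`. -/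
theorem laplace_shift_halfdp (ε : ℝ) (hε : 0 < ε) (x : ℝ)
    (hx : x ∈ Set.Icc (-1 : ℝ) 1) (S : Set ℝ) (hS : MeasurableSet S) :
    (laplaceMeasure ε 0).map (fun t => x + t) S ≤
        ENNReal.ofReal (Real.exp (ε / 2)) * laplaceMeasure ε 0 S ∧
      laplaceMeasure ε 0 S ≤
        ENNReal.ofReal (Real.exp (ε / 2)) * (laplaceMeasure ε 0).map (fun t => x + t) S := by
  have hx1 : |x| ≤ 1 := abs_le.2 hx
  rw [laplace_map_apply ε x S hS, laplaceMeasure, withDensity_apply _ hS]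
  constructor
  · calc ∫⁻ u in S, ENNReal.ofReal (ε / 4 * Real.exp (-(ε * |u - x|) / 2))
        ≤ ∫⁻ u in S, ENNReal.ofReal (Real.exp (ε / 2)) *
            ENNReal.ofReal (ε / 4 * Real.exp (-(ε * |u - 0|) / 2)) := by
          refine setLIntegral_mono' hS fun u _ => ?_
          rw [← ENNReal.ofReal_mul (Real.exp_pos _).le]
          apply ENNReal.ofReal_le_ofReal
          refine density_ratio ε x hε hx1 _ _ ?_
          rw [sub_zero]
          simpa using abs_add_le (u - x) x
      _ = _ := lintegral_const_mul' _ _ ENNReal.ofReal_ne_top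
  · calc ∫⁻ u in S, ENNReal.ofReal (ε / 4 * Real.exp (-(ε * |u - 0|) / 2))
        ≤ ∫⁻ u in S, ENNReal.ofReal (Real.exp (ε / 2)) *
            ENNReal.ofReal (ε / 4 * Real.exp (-(ε * |u - x|) / 2)) := by
          refine setLIntegral_mono' hS fun u _ => ?_
          rw [← ENNReal.ofReal_mul (Real.exp_pos _).le]
          apply ENNReal.ofReal_le_ofReal
          rw [sub_zero]
          refine density_ratio ε x hε hx1 _ _ ?_
          exact abs_sub u x
      _ = _ := lintegral_const_mul' _ _ ENNReal.ofReal_ne_top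
end

section
/- In the modified Laplace matrix model, the expected squared Frobenius norm of the perturbation on the common support satisfies E‖P_{Ω_Z ∩ Ω_X}(X − Z)‖_F² ≤ 8s/ε², where s = |Ω_X|. -/
open MeasureTheory Real

/-- Distribution of the matrix `Z` obtained by applying the modified Laplace mechanism
independently to every entry of the partially observed rating matrix `X`
(`none` encodes a missing entry). -/
noncomputable def modLaplaceMatrix (ε : ℝ) {m n : ℕ} (X : Fin m × Fin n → Option ℝ) :
    Measure (Fin m × Fin n → Option ℝ) :=
  Measure.pi fun p => modLaplace ε (X p)

/-- Support of the non-missing entries of a partially observed matrix. -/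
def suppOf {m n : ℕ} (A : Fin m × Fin n → Option ℝ) : Finset (Fin m × Fin n) :=
  Finset.univ.filter fun p => (A p).isSome

open Set

/-! ### Auxiliary measurability facts for `Option ℝ` -/

/-- `Option α ≃ᵐ α ⊕ PUnit` for the comap measurable structure. -/
def optionMeasEquiv (α : Type*) [MeasurableSpace α] : Option α ≃ᵐ α ⊕ PUnit where
  toEquiv := Equiv.optionEquivSumPUnit α
  measurable_toFun := Measurable.of_comap_le le_rfl
  measurable_invFun := by
    intro s hs
    rcases hs with ⟨t, ht, rfl⟩
    have h : (Equiv.optionEquivSumPUnit α).symm ⁻¹' ((Equiv.optionEquivSumPUnit α) ⁻¹' t) = t := by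
      ext x; simp
    rw [show ((Equiv.optionEquivSumPUnit α).symm : α ⊕ PUnit → Option α) ⁻¹'
        ((Equiv.optionEquivSumPUnit α) ⁻¹' t) = t from h]
    exact ht

lemma measurable_some' {α : Type*} [MeasurableSpace α] :
    Measurable (Option.some : α → Option α) := by
  have h : (Option.some : α → Option α) = (optionMeasEquiv α).symm ∘ Sum.inl := by
    funext x; rfl
  rw [h]
  exact (optionMeasEquiv α).symm.measurable.comp measurable_inl

lemma measurable_optElim {α : Type*} [MeasurableSpace α] {β : Type*} [MeasurableSpace β]
    {f : α → β} (hf : Measurable f) (b : β) :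
    Measurable (fun z : Option α => Option.elim z b f) := by
  have h : (fun z : Option α => Option.elim z b f)
      = (Sum.elim f (fun _ => b)) ∘ (optionMeasEquiv α) := by
    funext z; cases z <;> rfl
  rw [h]
  exact (hf.sumElim measurable_const).comp (optionMeasEquiv α).measurable

/-! ### Marginal of a product of probability measures -/

lemma pi_map_eval {ι : Type*} [Fintype ι] [DecidableEq ι] {α : ι → Type*}
    [∀ i, MeasurableSpace (α i)]
    (μ : ∀ i, Measure (α i)) (h : ∀ i, IsProbabilityMeasure (μ i)) (i : ι) :
    (Measure.pi μ).map (Function.eval i) = μ i := by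
  haveI := h
  ext s hs
  rw [Measure.map_apply (measurable_pi_apply i) hs, Set.eval_preimage, Measure.pi_pi]
  rw [Finset.prod_eq_single i (fun j _ hj => by
    rw [Function.update_of_ne hj]; exact measure_univ) (by simp)]
  rw [Function.update_self]

/-! ### Real integrals for the Laplace density -/

lemma myIntegrable_comp_abs {f : ℝ → ℝ} (hf : IntegrableOn f (Ioi 0)) :
    Integrable fun x => f |x| := by
  have hIoi : IntegrableOn (fun x => f |x|) (Ioi 0) :=
    hf.congr_fun (fun x hx => by rw [abs_of_pos hx]) measurableSet_Ioi
  have hIic : IntegrableOn (fun x ↦ f |x|) (Iic 0) := by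
    rw [← Measure.map_neg_eq_self (volume : Measure ℝ)]
    have m : MeasurableEmbedding fun x : ℝ => -x := (Homeomorph.neg ℝ).measurableEmbedding
    rw [m.integrableOn_map_iff]
    simp_rw [Function.comp_def, abs_neg, neg_preimage, neg_Iic, neg_zero]
    exact Iff.mpr integrableOn_Ici_iff_integrableOn_Ioi hIoi
  have h := hIic.union hIoi
  rwa [Iic_union_Ioi, integrableOn_univ] at h

lemma intIoi_integrable {ε : ℝ} (hε : 0 < ε) (k : ℕ) :
    IntegrableOn (fun x : ℝ => x ^ k * (ε / 4 * Real.exp (-(ε * x) / 2))) (Ioi 0) := by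
  have h := integrableOn_rpow_mul_exp_neg_mul_rpow (p := 1) (s := k) (b := ε / 2)
    (lt_of_lt_of_le neg_one_lt_zero (Nat.cast_nonneg k)) one_pos (by positivity)
  have h2 : IntegrableOn
      (fun x : ℝ => ε / 4 * (x ^ (k:ℝ) * Real.exp (-(ε/2) * x ^ (1:ℝ)))) (Ioi 0) :=
    h.const_mul (ε / 4)
  refine h2.congr_fun (fun x hx => ?_) measurableSet_Ioi
  beta_reduce
  rw [Real.rpow_one, Real.rpow_natCast]
  ring_nf

lemma lap_integrable {ε : ℝ} (hε : 0 < ε) (c : ℝ) (k : ℕ) :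
    Integrable (fun t : ℝ => |t - c| ^ k * (ε / 4 * Real.exp (-(ε * |t - c|) / 2))) := by
  have h : Integrable (fun x : ℝ => |x| ^ k * (ε / 4 * Real.exp (-(ε * |x|) / 2))) :=
    myIntegrable_comp_abs (f := fun x : ℝ => x ^ k * (ε / 4 * Real.exp (-(ε * x) / 2)))
      (intIoi_integrable hε k)
  exact h.comp_sub_right c

lemma lap_dens_nonneg {ε : ℝ} (hε : 0 < ε) (c : ℝ) :
    ∀ t : ℝ, 0 ≤ ε / 4 * Real.exp (-(ε * |t - c|) / 2) := fun t => by positivity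

lemma lap_dens_meas (ε c : ℝ) :
    Measurable fun t : ℝ => ENNReal.ofReal (ε / 4 * Real.exp (-(ε * |t - c|) / 2)) := by
  fun_prop

lemma intIoi_mass {ε : ℝ} (hε : 0 < ε) :
    ∫ x in Ioi (0:ℝ), ε / 4 * Real.exp (-(ε * x) / 2) = 1 / 2 := by
  have h := integral_rpow_mul_exp_neg_mul_Ioi (a := 1) (r := ε / 2) one_pos (by positivity)
  simp only [sub_self, rpow_zero, one_mul, Real.Gamma_one, rpow_one, mul_one] at h
  rw [show (fun x : ℝ => ε / 4 * Real.exp (-(ε * x) / 2))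
      = fun x => ε / 4 * Real.exp (-(ε / 2 * x)) by funext x; ring_nf,
    MeasureTheory.integral_const_mul, h]
  field_simp
  ring

lemma lap_real_mass {ε : ℝ} (hε : 0 < ε) (c : ℝ) :
    ∫ t : ℝ, ε / 4 * Real.exp (-(ε * |t - c|) / 2) = 1 := by
  have h1 : ∫ t : ℝ, ε / 4 * Real.exp (-(ε * |t - c|) / 2)
      = ∫ t : ℝ, ε / 4 * Real.exp (-(ε * |t|) / 2) :=
    integral_sub_right_eq_self (μ := volume)
      (fun t : ℝ => ε / 4 * Real.exp (-(ε * |t|) / 2)) c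
  rw [h1, integral_comp_abs (f := fun x : ℝ => ε / 4 * Real.exp (-(ε * x) / 2)),
    intIoi_mass hε]
  norm_num

lemma lap_mass {ε : ℝ} (hε : 0 < ε) (c : ℝ) : IsProbabilityMeasure (laplaceMeasure ε c) := by
  constructor
  rw [laplaceMeasure, withDensity_apply _ MeasurableSet.univ, setLIntegral_univ,
    ← ofReal_integral_eq_lintegral_ofReal ((lap_integrable hε c 0).congr
        (Filter.Eventually.of_forall fun t => by simp))
      (Filter.Eventually.of_forall (lap_dens_nonneg hε c)), lap_real_mass hε c]
  exact ENNReal.ofReal_one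

lemma gamma3 : Real.Gamma 3 = 2 := by
  rw [show (3:ℝ) = (2:ℕ) + 1 by norm_num, Real.Gamma_nat_eq_factorial]
  norm_num

lemma intIoi_mom {ε : ℝ} (hε : 0 < ε) :
    ∫ x in Ioi (0:ℝ), x ^ 2 * (ε / 4 * Real.exp (-(ε * x) / 2)) = 4 / ε ^ 2 := by
  have h := integral_rpow_mul_exp_neg_mul_Ioi (a := 3) (r := ε / 2) (by norm_num) (by positivity)
  rw [show (3 - 1 : ℝ) = 2 by norm_num] at h
  have h2 : ∫ t in Ioi (0:ℝ), t ^ (2:ℕ) * Real.exp (-(ε / 2 * t))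
      = (1 / (ε / 2)) ^ (3:ℝ) * Real.Gamma 3 := by
    rw [← h]
    refine setIntegral_congr_fun measurableSet_Ioi (fun x hx => ?_)
    rw [← Real.rpow_natCast x 2]; norm_num
  rw [show (fun x : ℝ => x ^ 2 * (ε / 4 * Real.exp (-(ε * x) / 2)))
      = fun x => ε / 4 * (x ^ 2 * Real.exp (-(ε / 2 * x))) by funext x; ring_nf,
    MeasureTheory.integral_const_mul, h2, gamma3,
    show ((1 / (ε / 2)) ^ (3:ℝ)) = (2 / ε) ^ (3:ℕ) by
      rw [← Real.rpow_natCast (2 / ε) 3]; norm_num]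
  field_simp
  ring

lemma lap_real_mom {ε : ℝ} (hε : 0 < ε) (c : ℝ) :
    ∫ t : ℝ, ε / 4 * Real.exp (-(ε * |t - c|) / 2) * (c - t) ^ 2 = 8 / ε ^ 2 := by
  have key : (fun t : ℝ => ε / 4 * Real.exp (-(ε * |t - c|) / 2) * (c - t) ^ 2)
      = fun t : ℝ => |t - c| ^ 2 * (ε / 4 * Real.exp (-(ε * |t - c|) / 2)) := by
    funext t
    rw [sq_abs]
    ring_nf
  rw [key]
  have h1 := integral_sub_right_eq_self (μ := volume)
    (fun t : ℝ => |t| ^ 2 * (ε / 4 * Real.exp (-(ε * |t|) / 2))) c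
  rw [h1, integral_comp_abs (f := fun x : ℝ => x ^ 2 * (ε / 4 * Real.exp (-(ε * x) / 2))),
    intIoi_mom hε]
  field_simp
  ring

lemma lap_mom {ε : ℝ} (hε : 0 < ε) (c : ℝ) :
    ∫⁻ t, ENNReal.ofReal ((c - t) ^ 2) ∂laplaceMeasure ε c = ENNReal.ofReal (8 / ε ^ 2) := by
  rw [laplaceMeasure, lintegral_withDensity_eq_lintegral_mul _ (lap_dens_meas ε c)
    (by fun_prop)]
  have h : ∀ t : ℝ,
      ((fun t => ENNReal.ofReal (ε / 4 * Real.exp (-(ε * |t - c|) / 2))) *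
        fun t => ENNReal.ofReal ((c - t) ^ 2)) t
      = ENNReal.ofReal (ε / 4 * Real.exp (-(ε * |t - c|) / 2) * (c - t) ^ 2) := by
    intro t
    rw [Pi.mul_apply, ← ENNReal.ofReal_mul (lap_dens_nonneg hε c t)]
  rw [lintegral_congr h,
    ← ofReal_integral_eq_lintegral_ofReal
      (((lap_integrable hε c 2).congr (Filter.Eventually.of_forall fun t => by
        simp only [sq_abs]; ring)))
      (Filter.Eventually.of_forall fun t => by positivity),
    lap_real_mom hε c]

/-! ### The modified Laplace mechanism is a probability measure -/

lemma modLaplace_isProb {ε : ℝ} (hε : 0 < ε) (x : Option ℝ) :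
    IsProbabilityMeasure (modLaplace ε x) := by
  have hE : (0:ℝ) < Real.exp (ε/2) + 1 := by positivity
  have hq : ENNReal.ofReal (Real.exp (ε/2) / (Real.exp (ε/2) + 1)) +
      ENNReal.ofReal (1 / (Real.exp (ε/2) + 1)) = 1 := by
    rw [← ENNReal.ofReal_add (by positivity) (by positivity), ← ENNReal.ofReal_one]
    congr 1
    field_simp
  constructor
  cases x with
  | some r =>
    haveI := lap_mass hε r
    simp only [modLaplace, Measure.add_apply, Measure.smul_apply, smul_eq_mul,
      Measure.map_apply measurable_some' MeasurableSet.univ, Set.preimage_univ,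
      measure_univ, mul_one]
    exact hq
  | none =>
    haveI := lap_mass hε 0
    simp only [modLaplace, Measure.add_apply, Measure.smul_apply, smul_eq_mul,
      Measure.map_apply measurable_some' MeasurableSet.univ, Set.preimage_univ,
      measure_univ, mul_one]
    exact hq

lemma single_bound {ε : ℝ} (hε : 0 < ε) (r : ℝ) :
    ∫⁻ z, Option.elim z 0 (fun t => ENNReal.ofReal ((r - t) ^ 2)) ∂modLaplace ε (some r)
      ≤ ENNReal.ofReal (8 / ε ^ 2) := by
  have hg : Measurable
      (fun z : Option ℝ => Option.elim z 0 fun t => ENNReal.ofReal ((r - t) ^ 2)) :=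
    measurable_optElim (by fun_prop) 0
  have hml : modLaplace ε (some r) =
      ENNReal.ofReal (Real.exp (ε / 2) / (Real.exp (ε / 2) + 1)) •
          (laplaceMeasure ε r).map Option.some +
        ENNReal.ofReal (1 / (Real.exp (ε / 2) + 1)) • Measure.dirac (none : Option ℝ) := rfl
  rw [hml, lintegral_add_measure, lintegral_smul_measure, lintegral_smul_measure,
    lintegral_map hg measurable_some', lintegral_dirac' _ hg]
  simp only [Option.elim, smul_eq_mul, mul_zero, add_zero]
  have hint : ∫⁻ t, ENNReal.ofReal ((r - t) ^ 2) ∂laplaceMeasure ε r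
      = ENNReal.ofReal (8 / ε ^ 2) := lap_mom hε r
  rw [hint]
  calc ENNReal.ofReal (Real.exp (ε / 2) / (Real.exp (ε / 2) + 1)) * ENNReal.ofReal (8 / ε ^ 2)
      ≤ 1 * ENNReal.ofReal (8 / ε ^ 2) := by
        refine mul_le_mul_left ?_ _
        refine ENNReal.ofReal_le_one.mpr ?_
        rw [div_le_one (by positivity)]
        linarith
    _ = ENNReal.ofReal (8 / ε ^ 2) := one_mul _

/-- Modified Laplace matrix model: the expected squared Frobenius norm of the perturbation
on the common support satisfies `E‖P_{Ω_Z ∩ Ω_X}(X − Z)‖_F² ≤ 8s/ε²`, where `s = |Ω_X|`. -/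
theorem modLaplace_common_support_bound (ε : ℝ) (hε : 0 < ε) (m n : ℕ)
    (X : Fin m × Fin n → Option ℝ)
    (hX : ∀ p, ∀ r : ℝ, X p = some r → r ∈ Set.Icc (-1 : ℝ) 1) :
    ∫⁻ Z, ENNReal.ofReal
        (∑ p ∈ suppOf Z ∩ suppOf X, ((X p).getD 0 - (Z p).getD 0) ^ 2)
        ∂modLaplaceMatrix ε X ≤
      ENNReal.ofReal (8 * (suppOf X).card / ε ^ 2) := by
  classical
  have hprob : ∀ p, IsProbabilityMeasure (modLaplace ε (X p)) :=
    fun p => modLaplace_isProb hε _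
  have hpt : ∀ Z : Fin m × Fin n → Option ℝ,
      ENNReal.ofReal (∑ p ∈ suppOf Z ∩ suppOf X, ((X p).getD 0 - (Z p).getD 0) ^ 2)
      = ∑ p ∈ suppOf X,
          Option.elim (Z p) 0 (fun t => ENNReal.ofReal (((X p).getD 0 - t) ^ 2)) := by
    intro Z
    have hset : suppOf Z ∩ suppOf X = (suppOf X).filter (fun p => (Z p).isSome) := by
      ext p
      simp only [suppOf, Finset.mem_inter, Finset.mem_filter, Finset.mem_univ, true_and]
      tauto
    rw [hset, Finset.sum_filter, ENNReal.ofReal_sum_of_nonneg (fun p _ => by positivity)]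
    refine Finset.sum_congr rfl fun p _ => ?_
    cases hzp : Z p <;> simp
  rw [lintegral_congr hpt,
    lintegral_finset_sum (μ := modLaplaceMatrix ε X) (s := suppOf X)
      (f := fun p Z => (Z p).elim 0 fun t => ENNReal.ofReal (((X p).getD 0 - t) ^ 2))
      (fun p _ => by
        exact (measurable_optElim
          (f := fun t => ENNReal.ofReal (((X p).getD 0 - t) ^ 2)) (by fun_prop) 0).comp
          (measurable_pi_apply p))]
  have hterm : ∀ p ∈ suppOf X,
      (∫⁻ Z, Option.elim (Z p) 0 (fun t => ENNReal.ofReal (((X p).getD 0 - t) ^ 2))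
        ∂modLaplaceMatrix ε X) ≤ ENNReal.ofReal (8 / ε ^ 2) := by
    intro p hp
    have hps : (X p).isSome := by
      simpa only [suppOf, Finset.mem_filter, Finset.mem_univ, true_and] using hp
    obtain ⟨r, hr⟩ := Option.isSome_iff_exists.mp hps
    have hmeas : Measurable
        (fun z : Option ℝ => Option.elim z 0 fun t =>
          ENNReal.ofReal (((X p).getD 0 - t) ^ 2)) :=
      measurable_optElim (by fun_prop) 0
    have hmap : (∫⁻ Z, Option.elim (Z p) 0 (fun t =>
        ENNReal.ofReal (((X p).getD 0 - t) ^ 2)) ∂modLaplaceMatrix ε X)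
        = ∫⁻ z, Option.elim z 0 (fun t => ENNReal.ofReal (((X p).getD 0 - t) ^ 2))
            ∂modLaplace ε (X p) := by
      rw [modLaplaceMatrix, ← pi_map_eval (fun q => modLaplace ε (X q)) hprob p,
        lintegral_map hmeas (measurable_pi_apply p)]
    rw [hmap]
    simp only [hr, Option.getD_some]
    exact single_bound hε r
  calc ∑ p ∈ suppOf X, ∫⁻ Z, Option.elim (Z p) 0
        (fun t => ENNReal.ofReal (((X p).getD 0 - t) ^ 2)) ∂modLaplaceMatrix ε X
      ≤ ∑ _p ∈ suppOf X, ENNReal.ofReal (8 / ε ^ 2) := Finset.sum_le_sum hterm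
    _ = (suppOf X).card * ENNReal.ofReal (8 / ε ^ 2) := by
        rw [Finset.sum_const, nsmul_eq_mul]
    _ = ENNReal.ofReal (8 * (suppOf X).card / ε ^ 2) := by
        rw [show (8:ℝ) * (suppOf X).card / ε ^ 2 = ((suppOf X).card : ℝ) * (8 / ε ^ 2) by ring,
          ENNReal.ofReal_mul (Nat.cast_nonneg _), ENNReal.ofReal_natCast]
end
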